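/- Matrix elements of the C-operator: for increasing sequences 1 ≤ x₁ < ⋯ < x_N ≤ M and 1 ≤ y₁ < ⋯ < y_{N+1} ≤ M, one has ⟨x₁⋯x_N| C(u) |y₁⋯y_{N+1}⟩ = Ḡ_{y,x}(u), where Ḡ_{y,x}(u) = 0 unless the interlacing condition y ≻ x holds (i.e. y₁ ≤ x₁ ≤ y₂ ≤ x₂ ≤ ⋯ ≤ x_N ≤ y_{N+1}), and if y ≻ x then, letting r₁ < ⋯ < r_{k+1} be the increasing sequence of those y_j (j=1,…,N+1) with y_j ∉ {x_{j−1}, x_j}, letting s₁ < ⋯ < s_k be the increasing sequence of those x_j (j=1,…,N) with x_j ∉ {y_j, y_{j+1}}, and setting s₀ = 0, s_{k+1} = M+1, Ḡ_{y,x}(u) = ((1−t)d)^{k+1} ((1−t)cu)^{k} · ∏_{j=1}^{k+1} (eu+tf)^{#{ℓ : r_j < x_ℓ < s_j}} (eu+f)^{s_j − r_j − 1 − #{ℓ : r_j < x_ℓ < s_j}} (atu+b)^{#{ℓ : s_{j−1} < x_ℓ < r_j}} (au+b)^{r_j − s_{j−1} − 1 − #{ℓ : s_{j−1} < x_ℓ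 < r_j}}. -/

import Mathlib

open Finset

variable {K : Type*} [Field K]

/-- Matrix elements `⟨γ, δ| L(u) |α, β⟩` of the homogeneous `L`-operator:
`γ` auxiliary output, `δ` quantum output, `α` auxiliary input, `β` quantum input. -/
def LL (t a b c d e f u : K) (γ δ α β : Fin 2) : K :=
  if γ = 0 ∧ δ = 0 ∧ α = 0 ∧ β = 0 then a * u + b
  else if γ = 0 ∧ δ = 1 ∧ α = 0 ∧ β = 1 then a * t * u + b
  else if γ = 0 ∧ δ = 1 ∧ α = 1 ∧ β = 0 then (1 - t) * c * u
  else if γ = 1 ∧ δ = 0 ∧ α = 0 ∧ β = 1 then (1 - t) * d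
  else if γ = 1 ∧ δ = 0 ∧ α = 1 ∧ β = 0 then e * u + f
  else if γ = 1 ∧ δ = 1 ∧ α = 1 ∧ β = 1 then e * u + t * f
  else 0

/-- The operator `C(u) = ⟨1|ₐ L_{aM}(u) ⋯ L_{a1}(u) |0⟩ₐ` on `M` sites,
as a matrix in the standard basis of `(ℂ²)^{⊗M}` indexed by `Fin M → Fin 2`. -/
def Cop (M : ℕ) (t a b c d e f u : K) :
    Matrix (Fin M → Fin 2) (Fin M → Fin 2) K :=
  Matrix.of fun γ β =>
    ∑ α : Fin (M + 1) → Fin 2,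
      if α 0 = 0 ∧ α (Fin.last M) = 1 then
        ∏ j : Fin M, LL t a b c d e f u (α j.succ) (γ j) (α j.castSucc) (β j)
      else 0

/-- The basis vector index of `(ℂ²)^{⊗M}` with particles (`1`s) exactly at the sites
in the range of `x`. -/
def cfg {M N : ℕ} (x : Fin N → Fin M) : Fin M → Fin 2 :=
  fun i => if ∃ j, x j = i then 1 else 0

/-- The interlacing condition `y ≻ x`, i.e. `y₁ ≤ x₁ ≤ y₂ ≤ x₂ ≤ ⋯ ≤ x_N ≤ y_{N+1}`. -/
def interlace {M N : ℕ} (y : Fin (N + 1) → Fin M) (x : Fin N → Fin M) : Prop :=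
  ∀ j : Fin N, y j.castSucc ≤ x j ∧ x j ≤ y j.succ

instance {M N : ℕ} (y : Fin (N + 1) → Fin M) (x : Fin N → Fin M) :
    Decidable (interlace y x) :=
  inferInstanceAs (Decidable (∀ j : Fin N, y j.castSucc ≤ x j ∧ x j ≤ y j.succ))

/-- Indices `j` with `y_j ∉ {x_{j-1}, x_j}` (the `p`-sequence indices). -/
def Pset {M N : ℕ} (y : Fin (N + 1) → Fin M) (x : Fin N → Fin M) : Finset (Fin (N + 1)) :=
  univ.filter fun j =>
    ∀ ℓ : Fin N, ((ℓ : ℕ) = (j : ℕ) ∨ (ℓ : ℕ) + 1 = (j : ℕ)) → x ℓ ≠ y j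

/-- Indices `ℓ` with `x_ℓ ∉ {y_ℓ, y_{ℓ+1}}` (the `q`-sequence indices). -/
def Qset {M N : ℕ} (y : Fin (N + 1) → Fin M) (x : Fin N → Fin M) : Finset (Fin N) :=
  univ.filter fun ℓ =>
    ∀ m : Fin (N + 1), ((m : ℕ) = (ℓ : ℕ) ∨ (m : ℕ) = (ℓ : ℕ) + 1) → y m ≠ x ℓ

/-- The (1-based) site `p_{i+1}` of the increasing enumeration of the `p`-sequence. -/
def pseq {M N : ℕ} (y : Fin (N + 1) → Fin M) (x : Fin N → Fin M)
    (i : Fin (Pset y x).card) : ℕ :=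
  ((y ((Pset y x).orderEmbOfFin rfl i)) : ℕ) + 1

/-- The (1-based) sites `q_i` of the `q`-sequence, extended by `q₀ = 0` and
`q_{k+1} = M + 1`. -/
def qseq {M N : ℕ} (y : Fin (N + 1) → Fin M) (x : Fin N → Fin M) (i : ℕ) : ℕ :=
  if h0 : i = 0 then 0
  else if h : i ≤ (Qset y x).card then
    ((x ((Qset y x).orderEmbOfFin rfl ⟨i - 1, by omega⟩)) : ℕ) + 1
  else M + 1

/-- The number of particles `x_ℓ` strictly between the (1-based) sites `lo` and `hi`. -/
def cnt {M N : ℕ} (x : Fin N → Fin M) (lo hi : ℕ) : ℕ :=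
  (univ.filter fun ℓ : Fin N => lo < (x ℓ : ℕ) + 1 ∧ (x ℓ : ℕ) + 1 < hi).card

/-- The skew polynomial `Ḡ_{y,x}(u)`. -/
def Gbarskew {M N : ℕ} (t a b c d e f u : K)
    (y : Fin (N + 1) → Fin M) (x : Fin N → Fin M) : K :=
  if interlace y x then
    ((1 - t) * d) ^ (Pset y x).card * ((1 - t) * c * u) ^ (Qset y x).card *
      ∏ j : Fin (Pset y x).card,
        (e * u + t * f) ^ cnt x (pseq y x j) (qseq y x ((j : ℕ) + 1)) *
          (e * u + f) ^ (qseq y x ((j : ℕ) + 1) - pseq y x j - 1 -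
            cnt x (pseq y x j) (qseq y x ((j : ℕ) + 1))) *
          (a * t * u + b) ^ cnt x (qseq y x (j : ℕ)) (pseq y x j) *
          (a * u + b) ^ (pseq y x j - qseq y x (j : ℕ) - 1 -
            cnt x (qseq y x (j : ℕ)) (pseq y x j))
  else 0

namespace CME

variable {M n k : ℕ}

lemma mem_iff_lt_card {t : Finset (Fin n)}
    (hdc : ∀ a b : Fin n, a ≤ b → b ∈ t → a ∈ t) (l : Fin n) :
    l ∈ t ↔ (l : ℕ) < t.card := by
  constructor
  · intro hl
    by_contra hlt
    push_neg at hlt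
    have hsub : Finset.Iic l ⊆ t := fun a ha => hdc a l (mem_Iic.1 ha) hl
    have := Finset.card_le_card hsub
    rw [Fin.card_Iic] at this
    omega
  · intro hl
    by_contra hnl
    have hsub : t ⊆ Finset.Iio l := by
      intro b hb
      rw [mem_Iio]
      by_contra hge
      push_neg at hge
      exact hnl (hdc l b hge hb)
    have := Finset.card_le_card hsub
    rw [Fin.card_Iio] at this
    omega

lemma ord_lt_iff {s : Finset (Fin M)} (h : s.card = k) (l : Fin k) (j : ℕ) :
    ((s.orderEmbOfFin h l : Fin M) : ℕ) < j ↔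
      (l : ℕ) < (s.filter fun i : Fin M => (i : ℕ) < j).card := by
  set t : Finset (Fin k) :=
    univ.filter (fun l' => ((s.orderEmbOfFin h l' : Fin M) : ℕ) < j) with ht
  have hdc : ∀ a b : Fin k, a ≤ b → b ∈ t → a ∈ t := by
    intro a b hab hb
    simp only [ht, mem_filter, mem_univ, true_and] at hb ⊢
    have : (s.orderEmbOfFin h a : Fin M) ≤ s.orderEmbOfFin h b :=
      (s.orderEmbOfFin h).monotone hab
    exact lt_of_le_of_lt (by exact_mod_cast this) hb
  have hcard : t.card = (s.filter fun i : Fin M => (i : ℕ) < j).card := by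
    apply Finset.card_nbij (fun l' => s.orderEmbOfFin h l')
    · intro l' hl'
      simp only [ht, mem_coe, mem_filter, mem_univ, true_and] at hl'
      exact mem_filter.2 ⟨s.orderEmbOfFin_mem h l', hl'⟩
    · exact fun a _ b _ hab => (s.orderEmbOfFin h).injective hab
    · intro i hi
      simp only [coe_filter, Set.mem_setOf_eq] at hi
      obtain ⟨his, hij⟩ := hi
      have : i ∈ Set.range (s.orderEmbOfFin h) := by
        rw [Finset.range_orderEmbOfFin]; exact his
      obtain ⟨l', hl'⟩ := this
      refine ⟨l', ?_, hl'⟩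
      simp only [ht, coe_filter, Set.mem_setOf_eq, Set.mem_univ, true_and, mem_univ]
      rw [hl']; exact hij
  have := mem_iff_lt_card hdc l
  rw [hcard] at this
  rw [← this]
  simp [ht]

lemma count_le {s : Finset (Fin M)} (h : s.card = k) (j : ℕ) :
    (s.filter fun i : Fin M => (i : ℕ) < j).card ≤ k := h ▸ Finset.card_filter_le s _

lemma ord_count_self {s : Finset (Fin M)} (h : s.card = k) (l : Fin k) :
    (s.filter fun i : Fin M => (i : ℕ) < ((s.orderEmbOfFin h l : Fin M) : ℕ)).card = (l : ℕ) := by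
  set c := (s.filter fun i : Fin M => (i : ℕ) < ((s.orderEmbOfFin h l : Fin M) : ℕ)).card with hc
  have hcle : c ≤ k := count_le h _
  have key : ∀ l' : Fin k, ((l' : ℕ) < (l : ℕ) ↔ (l' : ℕ) < c) := by
    intro l'
    have h1 := ord_lt_iff h l' ((s.orderEmbOfFin h l : Fin M) : ℕ)
    rw [← hc] at h1
    rw [← h1]
    have h2 : ((s.orderEmbOfFin h l' : Fin M) : ℕ) < ((s.orderEmbOfFin h l : Fin M) : ℕ) ↔
        (s.orderEmbOfFin h l' : Fin M) < s.orderEmbOfFin h l := Fin.lt_def.symm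
    rw [h2, (s.orderEmbOfFin h).strictMono.lt_iff_lt]
    exact (Fin.lt_def).symm
  rcases lt_trichotomy (l : ℕ) c with hlt | heq | hgt
  · have := (key l).2 hlt
    omega
  · exact heq.symm
  · have hlk := l.isLt
    have := (key ⟨c, by omega⟩).1 hgt
    simp only at this
    omega

lemma mem_ord {s : Finset (Fin M)} (h : s.card = k) {i : Fin M} (hi : i ∈ s) :
    ∃ l : Fin k, s.orderEmbOfFin h l = i := by
  have : i ∈ Set.range (s.orderEmbOfFin h) := by
    rw [Finset.range_orderEmbOfFin]; exact hi
  exact this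


variable {M n N : ℕ}

/-- Number of particles of `z` at sites `< j`. -/
def Ac (z : Fin n → Fin M) (j : ℕ) : ℕ :=
  (univ.filter fun m : Fin n => (z m : ℕ) < j).card

lemma Ac_zero (z : Fin n → Fin M) : Ac z 0 = 0 := by
  simp [Ac]

lemma Ac_top (z : Fin n → Fin M) {j : ℕ} (hj : M ≤ j) : Ac z j = n := by
  have : (univ.filter fun m : Fin n => (z m : ℕ) < j) = univ := by
    apply filter_true_of_mem
    intro m _
    exact lt_of_lt_of_le (z m).isLt hj
  simp [Ac, this]

lemma Ac_le (z : Fin n → Fin M) (j : ℕ) : Ac z j ≤ n := by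
  simpa [Ac] using Finset.card_filter_le univ (fun m : Fin n => (z m : ℕ) < j)

lemma cfg_val (z : Fin n → Fin M) (i : Fin M) :
    ((cfg z i : Fin 2) : ℕ) = if ∃ m, z m = i then 1 else 0 := by
  unfold cfg
  split_ifs <;> rfl

lemma Ac_succ (z : Fin n → Fin M) (hz : Function.Injective z) (i : Fin M) :
    Ac z ((i : ℕ) + 1) = Ac z (i : ℕ) + (if ∃ m, z m = i then 1 else 0) := by
  unfold Ac
  have hsplit : (univ.filter fun m : Fin n => (z m : ℕ) < (i : ℕ) + 1) =
      (univ.filter fun m : Fin n => (z m : ℕ) < (i : ℕ)) ∪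
        (univ.filter fun m : Fin n => z m = i) := by
    rw [← filter_or]
    apply filter_congr
    intro m _
    constructor
    · intro hm
      rcases Nat.lt_succ_iff_lt_or_eq.1 hm with h | h
      · exact Or.inl h
      · exact Or.inr (Fin.ext h)
    · rintro (h | h)
      · omega
      · rw [h]; omega
  rw [hsplit, Finset.card_union_of_disjoint]
  · congr 1
    split_ifs with hex
    · obtain ⟨m0, hm0⟩ := hex
      have : (univ.filter fun m : Fin n => z m = i) = {m0} := by
        ext m
        simp only [mem_filter, mem_univ, true_and, mem_singleton]
        constructor
        · intro h; exact hz (h.trans hm0.symm)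
        · intro h; rw [h, hm0]
      simp [this]
    · have : (univ.filter fun m : Fin n => z m = i) = ∅ := by
        ext m
        simp only [mem_filter, mem_univ, true_and, notMem_empty, iff_false]
        intro h
        exact hex ⟨m, h⟩
      simp [this]
  · rw [Finset.disjoint_left]
    intro m hm hm'
    simp only [mem_filter, mem_univ, true_and] at hm hm'
    rw [hm'] at hm
    omega

section Interlace

variable (x : Fin N → Fin M) (y : Fin (N + 1) → Fin M)

lemma bounds_of_interlace (hx : StrictMono x) (hy : StrictMono y)
    (hI : interlace y x) (j : ℕ) :
    Ac x j ≤ Ac y j ∧ Ac y j ≤ Ac x j + 1 := by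
  constructor
  · apply Finset.card_le_card_of_injOn Fin.castSucc
    · intro ℓ hℓ
      simp only [mem_coe, mem_filter, mem_univ, true_and] at hℓ ⊢
      have h1 := (hI ℓ).1
      have : (y ℓ.castSucc : ℕ) ≤ (x ℓ : ℕ) := h1
      omega
    · exact fun a _ b _ hab => Fin.castSucc_injective _ hab
  · calc Ac y j ≤ ((univ.filter fun ℓ : Fin N => (x ℓ : ℕ) < j).image Fin.succ).card + 1 := by
          have hsub : (univ.filter fun m : Fin (N + 1) => (y m : ℕ) < j) ⊆
              insert 0 ((univ.filter fun ℓ : Fin N => (x ℓ : ℕ) < j).image Fin.succ) := by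
            intro m hm
            simp only [mem_filter, mem_univ, true_and] at hm
            rcases Fin.eq_zero_or_eq_succ m with rfl | ⟨ℓ, rfl⟩
            · exact mem_insert_self _ _
            · apply mem_insert_of_mem
              apply mem_image_of_mem
              simp only [mem_filter, mem_univ, true_and]
              have h2 := (hI ℓ).2
              have : (x ℓ : ℕ) ≤ (y ℓ.succ : ℕ) := h2
              omega
          calc Ac y j ≤ _ := Finset.card_le_card hsub
            _ ≤ _ := Finset.card_insert_le _ _
      _ ≤ Ac x j + 1 := by
          have := Finset.card_image_le (s := univ.filter fun ℓ : Fin N => (x ℓ : ℕ) < j)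
            (f := Fin.succ)
          unfold Ac
          omega

lemma interlace_of_bounds (hx : StrictMono x) (hy : StrictMono y)
    (hb : ∀ j ≤ M, Ac x j ≤ Ac y j ∧ Ac y j ≤ Ac x j + 1) : interlace y x := by
  intro j
  constructor
  · by_contra h1
    push_neg at h1
    set J := (x j : ℕ) + 1 with hJ
    have hJM : J ≤ M := (x j).isLt
    have hAx : (j : ℕ) + 1 ≤ Ac x J := by
      have hsub : Finset.Iic j ⊆ univ.filter fun ℓ : Fin N => (x ℓ : ℕ) < J := by
        intro ℓ hℓ
        simp only [mem_Iic] at hℓ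
        simp only [mem_filter, mem_univ, true_and]
        have : x ℓ ≤ x j := hx.monotone hℓ
        have : (x ℓ : ℕ) ≤ (x j : ℕ) := this
        omega
      have := Finset.card_le_card hsub
      rw [Fin.card_Iic] at this
      exact this
    have hAy : Ac y J ≤ (j : ℕ) := by
      have hsub : (univ.filter fun m : Fin (N + 1) => (y m : ℕ) < J) ⊆
          Finset.Iio j.castSucc := by
        intro m hm
        simp only [mem_filter, mem_univ, true_and] at hm
        rw [mem_Iio]
        have hym : y m < y j.castSucc := by
          rw [Fin.lt_def]
          have : (x j : ℕ) < (y j.castSucc : ℕ) := h1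
          omega
        exact hy.lt_iff_lt.1 hym
      have := Finset.card_le_card hsub
      rw [Fin.card_Iio] at this
      simp at this; unfold Ac; omega
    have := (hb J hJM).1
    omega
  · by_contra h2
    push_neg at h2
    set J := (y j.succ : ℕ) + 1 with hJ
    have hJM : J ≤ M := (y j.succ).isLt
    have hAy : (j : ℕ) + 2 ≤ Ac y J := by
      have hsub : Finset.Iic j.succ ⊆ univ.filter fun m : Fin (N + 1) => (y m : ℕ) < J := by
        intro m hm
        simp only [mem_Iic] at hm
        simp only [mem_filter, mem_univ, true_and]
        have : y m ≤ y j.succ := hy.monotone hm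
        have : (y m : ℕ) ≤ (y j.succ : ℕ) := this
        omega
      have := Finset.card_le_card hsub
      rw [Fin.card_Iic] at this
      simp at this; unfold Ac; omega
    have hAx : Ac x J ≤ (j : ℕ) := by
      have hsub : (univ.filter fun ℓ : Fin N => (x ℓ : ℕ) < J) ⊆ Finset.Iio j := by
        intro ℓ hℓ
        simp only [mem_filter, mem_univ, true_and] at hℓ
        rw [mem_Iio]
        have hxℓ : x ℓ < x j := by
          rw [Fin.lt_def]
          have : (y j.succ : ℕ) < (x j : ℕ) := h2
          omega
        exact hx.lt_iff_lt.1 hxℓ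
      have := Finset.card_le_card hsub
      rw [Fin.card_Iio] at this
      exact this
    have := (hb J hJM).2
    omega

end Interlace

section Forced

variable {K : Type*} [Field K]

lemma LL_conserve (t a b c d e f u : K) (γ δ α β : Fin 2)
    (h : LL t a b c d e f u γ δ α β ≠ 0) : (γ : ℕ) + (δ : ℕ) = (α : ℕ) + (β : ℕ) := by
  fin_cases γ <;> fin_cases δ <;> fin_cases α <;> fin_cases β <;>
    simp_all [LL]

variable {x : Fin N → Fin M} {y : Fin (N + 1) → Fin M}

/-- The unique auxiliary configuration compatible with `cfg x`, `cfg y`. -/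
def αd (x : Fin N → Fin M) (y : Fin (N + 1) → Fin M) : Fin (M + 1) → Fin 2 :=
  fun j => if Ac y (j : ℕ) = Ac x (j : ℕ) + 1 then 1 else 0

lemma forced (hx : Function.Injective x) (hy : Function.Injective y)
    (t a b c d e f u : K) {α : Fin (M + 1) → Fin 2} (hα0 : α 0 = 0)
    (hprod : ∏ j : Fin M,
      LL t a b c d e f u (α j.succ) (cfg x j) (α j.castSucc) (cfg y j) ≠ 0) :
    ∀ j : Fin (M + 1), (α j : ℕ) + Ac x (j : ℕ) = Ac y (j : ℕ) := by
  have hfac : ∀ j : Fin M,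
      LL t a b c d e f u (α j.succ) (cfg x j) (α j.castSucc) (cfg y j) ≠ 0 := by
    intro j
    intro hz
    exact hprod (Finset.prod_eq_zero (mem_univ j) hz)
  intro j
  induction j using Fin.induction with
  | zero =>
      rw [hα0]
      simp [Ac_zero]
  | succ j ih =>
      have hcons := LL_conserve t a b c d e f u _ _ _ _ (hfac j)
      have hAx := Ac_succ x hx j
      have hAy := Ac_succ y hy j
      have hcx := cfg_val x j
      have hcy := cfg_val y j
      rw [hcx, hcy] at hcons
      have ih' : ((α j.castSucc : Fin 2) : ℕ) + Ac x (j : ℕ) = Ac y (j : ℕ) := by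
        have h2 : ((j.castSucc : Fin (M + 1)) : ℕ) = (j : ℕ) := rfl
        rw [← h2]; exact ih
      show ((α j.succ : Fin 2) : ℕ) + Ac x ((j : ℕ) + 1) = Ac y ((j : ℕ) + 1)
      omega

lemma forced_eq_αd {α : Fin (M + 1) → Fin 2}
    (h : ∀ j : Fin (M + 1), (α j : ℕ) + Ac x (j : ℕ) = Ac y (j : ℕ)) : α = αd x y := by
  funext j
  have hj := h j
  have hlt : (α j : ℕ) < 2 := (α j).isLt
  unfold αd
  split_ifs with hS
  · have : (α j : ℕ) = 1 := by omega
    exact Fin.ext this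
  · have : (α j : ℕ) = 0 := by
      have := Ac_le x (j : ℕ)
      omega
    exact Fin.ext this

lemma αd_zero : αd x y 0 = 0 := by
  unfold αd
  rw [if_neg]
  simp [Ac_zero]

lemma αd_last : αd x y (Fin.last M) = 1 := by
  unfold αd
  rw [if_pos]
  have h1 : ((Fin.last M : Fin (M + 1)) : ℕ) = M := rfl
  rw [h1, Ac_top x (le_refl M), Ac_top y (le_refl M)]

lemma Cop_apply (t a b c d e f u : K) (hx : StrictMono x) (hy : StrictMono y) :
    Cop M t a b c d e f u (cfg x) (cfg y) =
      if interlace y x then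
        ∏ j : Fin M,
          LL t a b c d e f u (αd x y j.succ) (cfg x j) (αd x y j.castSucc) (cfg y j)
      else 0 := by
  show (∑ α : Fin (M + 1) → Fin 2,
      if α 0 = 0 ∧ α (Fin.last M) = 1 then
        ∏ j : Fin M, LL t a b c d e f u (α j.succ) (cfg x j) (α j.castSucc) (cfg y j)
      else 0) = _
  split_ifs with hI
  · rw [Finset.sum_eq_single (αd x y)]
    · rw [if_pos ⟨αd_zero, αd_last⟩]
    · intro α _ hne
      split_ifs with hbc
      · by_contra hp
        exact hne (forced_eq_αd (forced hx.injective hy.injective t a b c d e f u hbc.1 hp))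
      · rfl
    · intro h
      exact absurd (mem_univ _) h
  · apply Finset.sum_eq_zero
    intro α _
    split_ifs with hbc
    · by_contra hp
      have hfj := forced hx.injective hy.injective t a b c d e f u hbc.1 hp
      apply hI
      apply interlace_of_bounds x y hx hy
      intro j hj
      have := hfj ⟨j, by omega⟩
      have hlt : ((α ⟨j, by omega⟩ : Fin 2) : ℕ) < 2 := (α _).isLt
      simp only at this
      omega
    · rfl

end Forced

section Sites

variable (x : Fin N → Fin M) (y : Fin (N + 1) → Fin M)

/-- Sites with a `y`-particle but no `x`-particle (up-steps). -/
def US : Finset (Fin M) := univ.filter fun i => (∃ m, y m = i) ∧ ¬ ∃ ℓ, x ℓ = i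

/-- Sites with an `x`-particle but no `y`-particle (down-steps). -/
def DS : Finset (Fin M) := univ.filter fun i => (∃ ℓ, x ℓ = i) ∧ ¬ ∃ m, y m = i

def Ucnt (j : ℕ) : ℕ := ((US x y).filter fun i : Fin M => (i : ℕ) < j).card

def Dcnt (j : ℕ) : ℕ := ((DS x y).filter fun i : Fin M => (i : ℕ) < j).card

lemma Ac_site (z : Fin n → Fin M) (hz : Function.Injective z) (j : ℕ) :
    Ac z j = (univ.filter fun i : Fin M => (∃ m, z m = i) ∧ (i : ℕ) < j).card := by
  apply Finset.card_nbij z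
  · intro m hm
    simp only [mem_coe, mem_filter, mem_univ, true_and] at hm ⊢
    exact ⟨⟨m, rfl⟩, hm⟩
  · exact fun a _ b _ hab => hz hab
  · intro i hi
    simp only [coe_filter, Set.mem_setOf_eq, mem_univ, true_and] at hi
    obtain ⟨⟨m, rfl⟩, hij⟩ := hi
    exact ⟨m, by simpa using hij, rfl⟩

lemma key_identity (hx : Function.Injective x) (hy : Function.Injective y) (j : ℕ) :
    Ac y j + Dcnt x y j = Ac x j + Ucnt x y j := by
  classical
  set Sh := (univ.filter fun i : Fin M =>
    ((∃ m, y m = i) ∧ (i : ℕ) < j) ∧ ∃ ℓ, x ℓ = i).card with hSh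
  have hy' : Ac y j = Sh + Ucnt x y j := by
    rw [Ac_site y hy j]
    rw [← Finset.card_filter_add_card_filter_not
      (p := fun i : Fin M => ∃ ℓ, x ℓ = i) (s := univ.filter fun i : Fin M =>
        (∃ m, y m = i) ∧ (i : ℕ) < j)]
    · congr 1
      · rw [Finset.filter_filter]
      · rw [Ucnt, US, Finset.filter_filter, Finset.filter_filter]
        apply congrArg
        apply filter_congr
        intro i _
        tauto
  have hx' : Ac x j = ((univ.filter fun i : Fin M =>
      ((∃ ℓ, x ℓ = i) ∧ (i : ℕ) < j) ∧ ∃ m, y m = i).card) + Dcnt x y j := by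
    rw [Ac_site x hx j]
    rw [← Finset.card_filter_add_card_filter_not
      (p := fun i : Fin M => ∃ m, y m = i) (s := univ.filter fun i : Fin M =>
        (∃ ℓ, x ℓ = i) ∧ (i : ℕ) < j)]
    · congr 1
      · rw [Finset.filter_filter]
      · rw [Dcnt, DS, Finset.filter_filter, Finset.filter_filter]
        apply congrArg
        apply filter_congr
        intro i _
        tauto
  have hsame : (univ.filter fun i : Fin M =>
      ((∃ ℓ, x ℓ = i) ∧ (i : ℕ) < j) ∧ ∃ m, y m = i).card = Sh := by
    rw [hSh]
    apply congrArg
    apply filter_congr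
    intro i _
    tauto
  omega

end Sites

section Main

variable {x : Fin N → Fin M} {y : Fin (N + 1) → Fin M}

lemma Pmem (hx : StrictMono x) (hy : StrictMono y) (hI : interlace y x)
    (m : Fin (N + 1)) : m ∈ Pset y x ↔ ¬ ∃ ℓ, x ℓ = y m := by
  rw [Pset, mem_filter]
  simp only [mem_univ, true_and]
  constructor
  · intro h ⟨ℓ, hℓ⟩
    have h1 : (ℓ : ℕ) ≤ (m : ℕ) := by
      have := (hI ℓ).1
      rw [hℓ] at this
      have := hy.le_iff_le.1 this
      simpa [Fin.le_def] using this
    have h2 : (m : ℕ) ≤ (ℓ : ℕ) + 1 := by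
      have := (hI ℓ).2
      rw [hℓ] at this
      have := hy.le_iff_le.1 this
      simpa [Fin.le_def] using this
    exact h ℓ (by omega) hℓ
  · intro h ℓ _ hℓ
    exact h ⟨ℓ, hℓ⟩

lemma Qmem (hx : StrictMono x) (hy : StrictMono y) (hI : interlace y x)
    (ℓ : Fin N) : ℓ ∈ Qset y x ↔ ¬ ∃ m, y m = x ℓ := by
  rw [Qset, mem_filter]
  simp only [mem_univ, true_and]
  constructor
  · intro h ⟨m, hm⟩
    have h1 : (ℓ : ℕ) ≤ (m : ℕ) := by
      have := (hI ℓ).1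
      rw [← hm] at this
      have := hy.le_iff_le.1 this
      simpa [Fin.le_def] using this
    have h2 : (m : ℕ) ≤ (ℓ : ℕ) + 1 := by
      have := (hI ℓ).2
      rw [← hm] at this
      have := hy.le_iff_le.1 this
      simpa [Fin.le_def] using this
    exact h m (by omega) hm
  · intro h m _ hm
    exact h ⟨m, hm⟩

lemma US_eq_image (hx : StrictMono x) (hy : StrictMono y) (hI : interlace y x) :
    US x y = (Pset y x).image y := by
  ext i
  simp only [US, mem_filter, mem_univ, true_and, mem_image]
  constructor
  · rintro ⟨⟨m, rfl⟩, hnx⟩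
    exact ⟨m, (Pmem hx hy hI m).2 hnx, rfl⟩
  · rintro ⟨m, hm, rfl⟩
    exact ⟨⟨m, rfl⟩, (Pmem hx hy hI m).1 hm⟩

lemma DS_eq_image (hx : StrictMono x) (hy : StrictMono y) (hI : interlace y x) :
    DS x y = (Qset y x).image x := by
  ext i
  simp only [DS, mem_filter, mem_univ, true_and, mem_image]
  constructor
  · rintro ⟨⟨ℓ, rfl⟩, hny⟩
    exact ⟨ℓ, (Qmem hx hy hI ℓ).2 hny, rfl⟩
  · rintro ⟨ℓ, hℓ, rfl⟩
    exact ⟨⟨ℓ, rfl⟩, (Qmem hx hy hI ℓ).1 hℓ⟩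

lemma card_US (hx : StrictMono x) (hy : StrictMono y) (hI : interlace y x) :
    (US x y).card = (Pset y x).card := by
  rw [US_eq_image hx hy hI, Finset.card_image_of_injective _ hy.injective]

lemma card_DS (hx : StrictMono x) (hy : StrictMono y) (hI : interlace y x) :
    (DS x y).card = (Qset y x).card := by
  rw [DS_eq_image hx hy hI, Finset.card_image_of_injective _ hx.injective]

lemma Ucnt_top (j : ℕ) (hj : M ≤ j) : Ucnt x y j = (US x y).card := by
  unfold Ucnt
  congr 1
  apply filter_true_of_mem
  intro i _
  exact lt_of_lt_of_le i.isLt hj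

lemma Dcnt_top (j : ℕ) (hj : M ≤ j) : Dcnt x y j = (DS x y).card := by
  unfold Dcnt
  congr 1
  apply filter_true_of_mem
  intro i _
  exact lt_of_lt_of_le i.isLt hj

lemma card_US_DS (hx : StrictMono x) (hy : StrictMono y) :
    (US x y).card = (DS x y).card + 1 := by
  have := key_identity x y hx.injective hy.injective M
  rw [Ucnt_top M (le_refl M), Dcnt_top M (le_refl M),
    Ac_top x (le_refl M), Ac_top y (le_refl M)] at this
  omega

lemma S1_iff (hx : StrictMono x) (hy : StrictMono y) (hI : interlace y x) (j : ℕ) :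
    (Ac y j = Ac x j + 1 ↔ Ucnt x y j = Dcnt x y j + 1) ∧
    (Ac y j = Ac x j ↔ Ucnt x y j = Dcnt x y j) := by
  have hk := key_identity x y hx.injective hy.injective j
  have hbd := bounds_of_interlace x y hx hy hI j
  omega

lemma ordU_eq (hx : StrictMono x) (hy : StrictMono y) (hI : interlace y x)
    (h : (US x y).card = (Pset y x).card) (l : Fin (Pset y x).card) :
    (US x y).orderEmbOfFin h l = y ((Pset y x).orderEmbOfFin rfl l) := by
  have hmono : StrictMono (fun l : Fin (Pset y x).card =>
      y ((Pset y x).orderEmbOfFin rfl l)) :=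
    hy.comp ((Pset y x).orderEmbOfFin rfl).strictMono
  have hfs : ∀ l : Fin (Pset y x).card,
      y ((Pset y x).orderEmbOfFin rfl l) ∈ US x y := by
    intro l
    have hmem := (Pset y x).orderEmbOfFin_mem rfl l
    simp only [US, mem_filter, mem_univ, true_and]
    exact ⟨⟨_, rfl⟩, (Pmem hx hy hI _).1 hmem⟩
  have := Finset.orderEmbOfFin_unique h hfs hmono
  exact (congrFun this l).symm

lemma ordD_eq (hx : StrictMono x) (hy : StrictMono y) (hI : interlace y x)
    (h : (DS x y).card = (Qset y x).card) (l : Fin (Qset y x).card) :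
    (DS x y).orderEmbOfFin h l = x ((Qset y x).orderEmbOfFin rfl l) := by
  have hmono : StrictMono (fun l : Fin (Qset y x).card =>
      x ((Qset y x).orderEmbOfFin rfl l)) :=
    hx.comp ((Qset y x).orderEmbOfFin rfl).strictMono
  have hfs : ∀ l : Fin (Qset y x).card,
      x ((Qset y x).orderEmbOfFin rfl l) ∈ DS x y := by
    intro l
    have hmem := (Qset y x).orderEmbOfFin_mem rfl l
    simp only [DS, mem_filter, mem_univ, true_and]
    exact ⟨⟨_, rfl⟩, (Qmem hx hy hI _).1 hmem⟩
  have := Finset.orderEmbOfFin_unique h hfs hmono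
  exact (congrFun this l).symm

lemma pseq_eq (hx : StrictMono x) (hy : StrictMono y) (hI : interlace y x)
    (h : (US x y).card = (Pset y x).card) (l : Fin (Pset y x).card) :
    pseq y x l = (((US x y).orderEmbOfFin h l : Fin M) : ℕ) + 1 := by
  rw [pseq, ordU_eq hx hy hI h l]

lemma qseq_eq (hx : StrictMono x) (hy : StrictMono y) (hI : interlace y x)
    (h : (DS x y).card = (Qset y x).card) (i : ℕ) (hi0 : i ≠ 0)
    (hik : i ≤ (Qset y x).card) :
    qseq y x i = (((DS x y).orderEmbOfFin h ⟨i - 1, by omega⟩ : Fin M) : ℕ) + 1 := by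
  rw [qseq, dif_neg hi0, dif_pos hik, ordD_eq hx hy hI h ⟨i - 1, by omega⟩]

lemma qseq_zero : qseq y x 0 = 0 := by rw [qseq, dif_pos rfl]

lemma qseq_top (i : ℕ) (hi : (Qset y x).card < i) : qseq y x i = M + 1 := by
  rw [qseq, dif_neg (by omega), dif_neg (by omega)]


lemma card_PQ (hx : StrictMono x) (hy : StrictMono y) (hI : interlace y x) :
    (Pset y x).card = (Qset y x).card + 1 := by
  rw [← card_US hx hy hI, ← card_DS hx hy hI]
  exact card_US_DS hx hy

lemma upSite (hx : StrictMono x) (hy : StrictMono y) (hI : interlace y x)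
    (h : (US x y).card = (Pset y x).card) (l : Fin (Pset y x).card) :
    Ucnt x y (((US x y).orderEmbOfFin h l : Fin M) : ℕ) = (l : ℕ) ∧
    Dcnt x y (((US x y).orderEmbOfFin h l : Fin M) : ℕ) = (l : ℕ) ∧
    Ac y (((US x y).orderEmbOfFin h l : Fin M) : ℕ) =
      Ac x (((US x y).orderEmbOfFin h l : Fin M) : ℕ) := by
  set i := (US x y).orderEmbOfFin h l with hi
  have hmem : i ∈ US x y := (US x y).orderEmbOfFin_mem h l
  have hUc : Ucnt x y (i : ℕ) = (l : ℕ) := ord_count_self h l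
  simp only [US, mem_filter, mem_univ, true_and] at hmem
  have hAy := Ac_succ y hy.injective i
  have hAx := Ac_succ x hx.injective i
  rw [if_pos hmem.1] at hAy
  rw [if_neg hmem.2] at hAx
  have hbd1 := bounds_of_interlace x y hx hy hI ((i : ℕ) + 1)
  have hbd0 := bounds_of_interlace x y hx hy hI (i : ℕ)
  have hnS : Ac y (i : ℕ) = Ac x (i : ℕ) := by omega
  have := (S1_iff hx hy hI (i : ℕ)).2.1 hnS
  exact ⟨hUc, by omega, hnS⟩

lemma downSite (hx : StrictMono x) (hy : StrictMono y) (hI : interlace y x)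
    (h : (DS x y).card = (Qset y x).card) (l : Fin (Qset y x).card) :
    Dcnt x y (((DS x y).orderEmbOfFin h l : Fin M) : ℕ) = (l : ℕ) ∧
    Ucnt x y (((DS x y).orderEmbOfFin h l : Fin M) : ℕ) = (l : ℕ) + 1 ∧
    Ac y (((DS x y).orderEmbOfFin h l : Fin M) : ℕ) =
      Ac x (((DS x y).orderEmbOfFin h l : Fin M) : ℕ) + 1 := by
  set i := (DS x y).orderEmbOfFin h l with hi
  have hmem : i ∈ DS x y := (DS x y).orderEmbOfFin_mem h l
  have hDc : Dcnt x y (i : ℕ) = (l : ℕ) := ord_count_self h l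
  simp only [DS, mem_filter, mem_univ, true_and] at hmem
  have hAy := Ac_succ y hy.injective i
  have hAx := Ac_succ x hx.injective i
  rw [if_neg hmem.2] at hAy
  rw [if_pos hmem.1] at hAx
  have hbd1 := bounds_of_interlace x y hx hy hI ((i : ℕ) + 1)
  have hbd0 := bounds_of_interlace x y hx hy hI (i : ℕ)
  have hS : Ac y (i : ℕ) = Ac x (i : ℕ) + 1 := by omega
  have := (S1_iff hx hy hI (i : ℕ)).1.1 hS
  exact ⟨hDc, by omega, hS⟩

lemma notin_US (hx : StrictMono x) (hy : StrictMono y) (hI : interlace y x)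
    (hU : (US x y).card = (Pset y x).card) {i : Fin M}
    (hS : Ac y (i : ℕ) = Ac x (i : ℕ) + 1) : i ∉ US x y := by
  intro hmem
  obtain ⟨l, hl⟩ := mem_ord hU hmem
  have := (upSite hx hy hI hU l).2.2
  rw [hl] at this
  omega

lemma notin_DS (hx : StrictMono x) (hy : StrictMono y) (hI : interlace y x)
    (hD : (DS x y).card = (Qset y x).card) {i : Fin M}
    (hS : Ac y (i : ℕ) = Ac x (i : ℕ)) : i ∉ DS x y := by
  intro hmem
  obtain ⟨l, hl⟩ := mem_ord hD hmem
  have := (downSite hx hy hI hD l).2.2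
  rw [hl] at this
  omega

lemma Ucnt_def (i : Fin M) :
    ((US x y).filter fun i' : Fin M => (i' : ℕ) < (i : ℕ)).card = Ucnt x y (i : ℕ) := rfl

lemma Dcnt_def (i : Fin M) :
    ((DS x y).filter fun i' : Fin M => (i' : ℕ) < (i : ℕ)).card = Dcnt x y (i : ℕ) := rfl

lemma qseq_eq' (hx : StrictMono x) (hy : StrictMono y) (hI : interlace y x)
    (h : (DS x y).card = (Qset y x).card) (i : ℕ) (hi0 : i ≠ 0)
    (hik : i ≤ (Qset y x).card) (l0 : Fin (Qset y x).card) (hl0 : (l0 : ℕ) = i - 1) :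
    qseq y x i = (((DS x y).orderEmbOfFin h l0 : Fin M) : ℕ) + 1 := by
  rw [qseq_eq hx hy hI h i hi0 hik]
  have harg : (⟨i - 1, by omega⟩ : Fin (Qset y x).card) = l0 := Fin.ext hl0.symm
  exact congrArg (fun z : Fin M => (z : ℕ) + 1) (congrArg _ harg)

lemma between1 (hx : StrictMono x) (hy : StrictMono y) (hI : interlace y x)
    (hU : (US x y).card = (Pset y x).card) (hD : (DS x y).card = (Qset y x).card)
    (l : Fin (Pset y x).card) (i : Fin M)
    (h1 : pseq y x l < (i : ℕ) + 1) (h2 : (i : ℕ) + 1 < qseq y x ((l : ℕ) + 1)) :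
    Ucnt x y (i : ℕ) = (l : ℕ) + 1 ∧ Dcnt x y (i : ℕ) = (l : ℕ) ∧
    Ac y (i : ℕ) = Ac x (i : ℕ) + 1 ∧ i ∉ US x y ∧ i ∉ DS x y := by
  have hk := card_PQ hx hy hI
  have hUdef := Ucnt_def (x := x) (y := y) i
  have hDdef := Dcnt_def (x := x) (y := y) i
  have hUcge : (l : ℕ) < Ucnt x y (i : ℕ) := by
    rw [pseq_eq hx hy hI hU l] at h1
    rw [← hUdef]
    exact (ord_lt_iff hU l (i : ℕ)).1 (by omega)
  have hDcle : Dcnt x y (i : ℕ) ≤ (l : ℕ) := by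
    by_cases hcase : (l : ℕ) + 1 ≤ (Qset y x).card
    · obtain ⟨l0, hl0⟩ : ∃ l0 : Fin (Qset y x).card, (l0 : ℕ) = (l : ℕ) :=
        ⟨⟨(l : ℕ), by omega⟩, rfl⟩
      rw [qseq_eq' hx hy hI hD ((l : ℕ) + 1) (by omega) hcase l0 (by omega)] at h2
      have hord := ord_lt_iff hD l0 (i : ℕ)
      rw [hDdef] at hord
      omega
    · have hcle := count_le hD (s := DS x y) (i : ℕ)
      rw [hDdef] at hcle
      have hlk := l.isLt
      omega
  have hopt : Ac y (i : ℕ) = Ac x (i : ℕ) ∨ Ac y (i : ℕ) = Ac x (i : ℕ) + 1 := by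
    have := bounds_of_interlace x y hx hy hI (i : ℕ)
    omega
  have hSiff := S1_iff hx hy hI (i : ℕ)
  have hS : Ac y (i : ℕ) = Ac x (i : ℕ) + 1 := by
    rcases hopt with h | h
    · have := hSiff.2.1 h
      omega
    · exact h
  have hUD := hSiff.1.1 hS
  have hnU : i ∉ US x y := notin_US hx hy hI hU hS
  have hnD : i ∉ DS x y := by
    intro hmem
    obtain ⟨l', hl'⟩ := mem_ord hD hmem
    have hds := downSite hx hy hI hD l'
    rw [hl'] at hds
    have hll' : (l' : ℕ) = (l : ℕ) := by omega
    by_cases hcase : (l : ℕ) + 1 ≤ (Qset y x).card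
    · rw [qseq_eq' hx hy hI hD ((l : ℕ) + 1) (by omega) hcase l' (by omega), hl'] at h2
      omega
    · have hlk := l'.isLt
      omega
  exact ⟨by omega, by omega, hS, hnU, hnD⟩

lemma between0 (hx : StrictMono x) (hy : StrictMono y) (hI : interlace y x)
    (hU : (US x y).card = (Pset y x).card) (hD : (DS x y).card = (Qset y x).card)
    (l : Fin (Pset y x).card) (i : Fin M)
    (h1 : qseq y x (l : ℕ) < (i : ℕ) + 1) (h2 : (i : ℕ) + 1 < pseq y x l) :
    Ucnt x y (i : ℕ) = (l : ℕ) ∧ Dcnt x y (i : ℕ) = (l : ℕ) ∧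
    Ac y (i : ℕ) = Ac x (i : ℕ) ∧ i ∉ US x y ∧ i ∉ DS x y := by
  have hk := card_PQ hx hy hI
  have hUdef := Ucnt_def (x := x) (y := y) i
  have hDdef := Dcnt_def (x := x) (y := y) i
  have hUcle : Ucnt x y (i : ℕ) ≤ (l : ℕ) := by
    rw [pseq_eq hx hy hI hU l] at h2
    by_contra hgt
    push_neg at hgt
    have := (ord_lt_iff hU l (i : ℕ)).2 (by rw [hUdef]; omega)
    omega
  have hDcge : (l : ℕ) ≤ Dcnt x y (i : ℕ) := by
    rcases Nat.eq_zero_or_pos (l : ℕ) with h0 | hpos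
    · omega
    · have hlk2 : (l : ℕ) ≤ (Qset y x).card := by
        have := l.isLt
        omega
      obtain ⟨l0, hl0⟩ : ∃ l0 : Fin (Qset y x).card, (l0 : ℕ) = (l : ℕ) - 1 :=
        ⟨⟨(l : ℕ) - 1, by omega⟩, rfl⟩
      rw [qseq_eq' hx hy hI hD (l : ℕ) (by omega) hlk2 l0 hl0] at h1
      have hord := ord_lt_iff hD l0 (i : ℕ)
      rw [hDdef] at hord
      omega
  have hopt : Ac y (i : ℕ) = Ac x (i : ℕ) ∨ Ac y (i : ℕ) = Ac x (i : ℕ) + 1 := by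
    have := bounds_of_interlace x y hx hy hI (i : ℕ)
    omega
  have hSiff := S1_iff hx hy hI (i : ℕ)
  have hS : Ac y (i : ℕ) = Ac x (i : ℕ) := by
    rcases hopt with h | h
    · exact h
    · have := hSiff.1.1 h
      omega
  have hUD := hSiff.2.1 hS
  have hnD : i ∉ DS x y := notin_DS hx hy hI hD hS
  have hnU : i ∉ US x y := by
    intro hmem
    obtain ⟨l', hl'⟩ := mem_ord hU hmem
    have hus := upSite hx hy hI hU l'
    rw [hl'] at hus
    have hll' : (l' : ℕ) = (l : ℕ) := by omega
    rw [pseq_eq hx hy hI hU l] at h2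
    have heq : (US x y).orderEmbOfFin hU l = (US x y).orderEmbOfFin hU l' := by
      congr 1
      exact Fin.ext hll'.symm
    rw [heq, hl'] at h2
    omega
  exact ⟨by omega, by omega, hS, hnU, hnD⟩

lemma cover1 (hx : StrictMono x) (hy : StrictMono y) (hI : interlace y x)
    (hU : (US x y).card = (Pset y x).card) (hD : (DS x y).card = (Qset y x).card)
    (i : Fin M) (hS : Ac y (i : ℕ) = Ac x (i : ℕ) + 1)
    (hiU : i ∉ US x y) (hiD : i ∉ DS x y) :
    ∃ l : Fin (Pset y x).card,
      pseq y x l < (i : ℕ) + 1 ∧ (i : ℕ) + 1 < qseq y x ((l : ℕ) + 1) ∧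
        Dcnt x y (i : ℕ) = (l : ℕ) := by
  have hk := card_PQ hx hy hI
  have hUdef := Ucnt_def (x := x) (y := y) i
  have hDdef := Dcnt_def (x := x) (y := y) i
  have hUD := (S1_iff hx hy hI (i : ℕ)).1.1 hS
  have hUle : Ucnt x y (i : ℕ) ≤ (US x y).card := by
    rw [← hUdef]
    exact Finset.card_filter_le _ _
  rw [hU] at hUle
  obtain ⟨l, hl⟩ : ∃ l : Fin (Pset y x).card, (l : ℕ) = Dcnt x y (i : ℕ) :=
    ⟨⟨Dcnt x y (i : ℕ), by omega⟩, rfl⟩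
  refine ⟨l, ?_, ?_, hl.symm⟩
  · rw [pseq_eq hx hy hI hU l]
    have hord := ord_lt_iff hU l (i : ℕ)
    rw [hUdef] at hord
    omega
  · by_cases hcase : (l : ℕ) + 1 ≤ (Qset y x).card
    · obtain ⟨l0, hl0⟩ : ∃ l0 : Fin (Qset y x).card, (l0 : ℕ) = (l : ℕ) :=
        ⟨⟨(l : ℕ), by omega⟩, rfl⟩
      rw [qseq_eq' hx hy hI hD ((l : ℕ) + 1) (by omega) hcase l0 (by omega)]
      set d := (DS x y).orderEmbOfFin hD l0 with hd
      have hdm : d ∈ DS x y := (DS x y).orderEmbOfFin_mem hD _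
      have hne : i ≠ d := fun h => hiD (h ▸ hdm)
      have hord := ord_lt_iff hD l0 (i : ℕ)
      rw [hDdef] at hord
      have hnlt : ¬ ((d : ℕ) < (i : ℕ)) := fun hlt => by
        have := hord.1 hlt
        omega
      have : (i : ℕ) ≠ (d : ℕ) := fun h => hne (Fin.ext h)
      omega
    · rw [qseq_top _ (by omega)]
      have := i.isLt
      omega

lemma cover0 (hx : StrictMono x) (hy : StrictMono y) (hI : interlace y x)
    (hU : (US x y).card = (Pset y x).card) (hD : (DS x y).card = (Qset y x).card)
    (i : Fin M) (hS : Ac y (i : ℕ) = Ac x (i : ℕ))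
    (hiU : i ∉ US x y) (hiD : i ∉ DS x y) :
    ∃ l : Fin (Pset y x).card,
      qseq y x (l : ℕ) < (i : ℕ) + 1 ∧ (i : ℕ) + 1 < pseq y x l ∧
        Dcnt x y (i : ℕ) = (l : ℕ) := by
  have hk := card_PQ hx hy hI
  have hUdef := Ucnt_def (x := x) (y := y) i
  have hDdef := Dcnt_def (x := x) (y := y) i
  have hUD := (S1_iff hx hy hI (i : ℕ)).2.1 hS
  have hDle : Dcnt x y (i : ℕ) ≤ (DS x y).card := by
    rw [← hDdef]
    exact Finset.card_filter_le _ _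
  rw [hD] at hDle
  obtain ⟨l, hl⟩ : ∃ l : Fin (Pset y x).card, (l : ℕ) = Dcnt x y (i : ℕ) :=
    ⟨⟨Dcnt x y (i : ℕ), by omega⟩, rfl⟩
  refine ⟨l, ?_, ?_, hl.symm⟩
  · rcases Nat.eq_zero_or_pos (l : ℕ) with h0 | hpos
    · rw [h0, qseq_zero]
      omega
    · obtain ⟨l0, hl0⟩ : ∃ l0 : Fin (Qset y x).card, (l0 : ℕ) = (l : ℕ) - 1 :=
        ⟨⟨(l : ℕ) - 1, by omega⟩, rfl⟩
      rw [qseq_eq' hx hy hI hD (l : ℕ) (by omega) (by omega) l0 hl0]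
      have hord := ord_lt_iff hD l0 (i : ℕ)
      rw [hDdef] at hord
      omega
  · rw [pseq_eq hx hy hI hU l]
    set p := (US x y).orderEmbOfFin hU l with hp
    have hpm : p ∈ US x y := (US x y).orderEmbOfFin_mem hU _
    have hne : i ≠ p := fun h => hiU (h ▸ hpm)
    have hord := ord_lt_iff hU l (i : ℕ)
    rw [hUdef] at hord
    have hnlt : ¬ ((p : ℕ) < (i : ℕ)) := fun hlt => by
      have := hord.1 hlt
      omega
    have : (i : ℕ) ≠ (p : ℕ) := fun h => hne (Fin.ext h)
    omega


lemma card_between (lo hi : ℕ) (hhi : hi ≤ M + 1) :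
    (univ.filter fun i : Fin M => lo < (i : ℕ) + 1 ∧ (i : ℕ) + 1 < hi).card =
      hi - lo - 1 := by
  rcases Nat.eq_zero_or_pos hi with h0 | hpos
  · subst h0
    rw [Finset.filter_false_of_mem, Finset.card_empty]
    · omega
    · intro i _
      omega
  · have : (univ.filter fun i : Fin M => lo < (i : ℕ) + 1 ∧ (i : ℕ) + 1 < hi).card =
        (Finset.Ico lo (hi - 1)).card := by
      apply Finset.card_nbij (fun i : Fin M => (i : ℕ))
      · intro i hi'
        simp only [mem_coe, mem_filter, mem_univ, true_and] at hi'
        simp only [mem_coe, Finset.mem_Ico]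
        omega
      · intro a _ b _ hab
        exact Fin.ext hab
      · intro a ha
        rw [Finset.coe_Ico, Set.mem_Ico] at ha
        have haM : a < M := by omega
        refine ⟨⟨a, haM⟩, ?_, rfl⟩
        simp only [coe_filter, Set.mem_setOf_eq, mem_univ, true_and]
        omega
    rw [this, Nat.card_Ico]
    omega

lemma cnt_site (hx : StrictMono x) (lo hi : ℕ) :
    cnt x lo hi = (univ.filter fun i : Fin M =>
      (∃ ℓ, x ℓ = i) ∧ lo < (i : ℕ) + 1 ∧ (i : ℕ) + 1 < hi).card := by
  apply Finset.card_nbij x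
  · intro ℓ hℓ
    simp only [mem_coe, mem_filter, mem_univ, true_and] at hℓ ⊢
    exact ⟨⟨ℓ, rfl⟩, hℓ⟩
  · exact fun a _ b _ hab => hx.injective hab
  · intro i hi'
    simp only [coe_filter, Set.mem_setOf_eq, mem_univ, true_and] at hi'
    obtain ⟨⟨ℓ, rfl⟩, h1, h2⟩ := hi'
    exact ⟨ℓ, by simp only [coe_filter, Set.mem_setOf_eq, mem_univ, true_and]; exact ⟨h1, h2⟩, rfl⟩

lemma qseq_le_M1 (i : ℕ) : qseq y x i ≤ M + 1 := by
  rw [qseq]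
  split_ifs with h0 h1
  · omega
  · have := (x ((Qset y x).orderEmbOfFin rfl ⟨i - 1, by omega⟩)).isLt
    omega
  · omega

lemma pseq_le_M (l : Fin (Pset y x).card) : pseq y x l ≤ M := by
  rw [pseq]
  have := (y ((Pset y x).orderEmbOfFin rfl l)).isLt
  omega

variable {K : Type*} [Field K]

lemma prod_if_one {P : Fin M → Prop} [DecidablePred P] (v : K) :
    ∏ i : Fin M, (if P i then v else 1) = v ^ (univ.filter P).card := by
  rw [Finset.prod_ite, Finset.prod_const, Finset.prod_const_one, mul_one]

lemma LL_site (t a b c d e f u : K) (hx : StrictMono x) (hy : StrictMono y)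
    (hI : interlace y x) (i : Fin M) :
    LL t a b c d e f u (αd x y i.succ) (cfg x i) (αd x y i.castSucc) (cfg y i) =
      (if (∃ m, y m = i) ∧ ¬(∃ ℓ, x ℓ = i) then (1 - t) * d else 1) *
      (if (∃ ℓ, x ℓ = i) ∧ ¬(∃ m, y m = i) then (1 - t) * c * u else 1) *
      (if (∃ ℓ, x ℓ = i) ∧ (∃ m, y m = i) ∧ Ac y (i : ℕ) = Ac x (i : ℕ) + 1
        then e * u + t * f else 1) *
      (if ¬(∃ ℓ, x ℓ = i) ∧ ¬(∃ m, y m = i) ∧ Ac y (i : ℕ) = Ac x (i : ℕ) + 1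
        then e * u + f else 1) *
      (if (∃ ℓ, x ℓ = i) ∧ (∃ m, y m = i) ∧ ¬(Ac y (i : ℕ) = Ac x (i : ℕ) + 1)
        then a * t * u + b else 1) *
      (if ¬(∃ ℓ, x ℓ = i) ∧ ¬(∃ m, y m = i) ∧ ¬(Ac y (i : ℕ) = Ac x (i : ℕ) + 1)
        then a * u + b else 1) := by
  have hAy := Ac_succ y hy.injective i
  have hAx := Ac_succ x hx.injective i
  have hbd0 := bounds_of_interlace x y hx hy hI (i : ℕ)
  have hbd1 := bounds_of_interlace x y hx hy hI ((i : ℕ) + 1)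
  have hcast : αd x y i.castSucc =
      if Ac y (i : ℕ) = Ac x (i : ℕ) + 1 then 1 else 0 := rfl
  have hsucc : αd x y i.succ =
      if Ac y ((i : ℕ) + 1) = Ac x ((i : ℕ) + 1) + 1 then 1 else 0 := rfl
  have hcfgx : cfg x i = if ∃ ℓ, x ℓ = i then 1 else 0 := rfl
  have hcfgy : cfg y i = if ∃ m, y m = i then 1 else 0 := rfl
  by_cases hX : ∃ ℓ, x ℓ = i <;> by_cases hY : ∃ m, y m = i <;>
      by_cases hS : Ac y (i : ℕ) = Ac x (i : ℕ) + 1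
  · -- hX, hY, hS : shared site, S = 1
    rw [if_pos hX] at hAx
    rw [if_pos hY] at hAy
    have hS' : Ac y ((i : ℕ) + 1) = Ac x ((i : ℕ) + 1) + 1 := by omega
    rw [hcfgx, hcfgy, hcast, hsucc, if_pos hX, if_pos hY, if_pos hS, if_pos hS']
    simp [LL, hX, hY, hS]
  · -- hX, hY, ¬hS : shared site, S = 0
    rw [if_pos hX] at hAx
    rw [if_pos hY] at hAy
    have hS' : ¬(Ac y ((i : ℕ) + 1) = Ac x ((i : ℕ) + 1) + 1) := by omega
    rw [hcfgx, hcfgy, hcast, hsucc, if_pos hX, if_pos hY, if_neg hS, if_neg hS']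
    simp [LL, hX, hY, hS]
  · -- hX, ¬hY, hS : down step
    rw [if_pos hX] at hAx
    rw [if_neg hY] at hAy
    have hS' : ¬(Ac y ((i : ℕ) + 1) = Ac x ((i : ℕ) + 1) + 1) := by omega
    rw [hcfgx, hcfgy, hcast, hsucc, if_pos hX, if_neg hY, if_pos hS, if_neg hS']
    simp [LL, hX, hY, hS]
  · -- hX, ¬hY, ¬hS : impossible
    exfalso
    rw [if_pos hX] at hAx
    rw [if_neg hY] at hAy
    omega
  · -- ¬hX, hY, hS : impossible
    exfalso
    rw [if_neg hX] at hAx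
    rw [if_pos hY] at hAy
    omega
  · -- ¬hX, hY, ¬hS : up step
    rw [if_neg hX] at hAx
    rw [if_pos hY] at hAy
    have hS' : Ac y ((i : ℕ) + 1) = Ac x ((i : ℕ) + 1) + 1 := by omega
    rw [hcfgx, hcfgy, hcast, hsucc, if_neg hX, if_pos hY, if_neg hS, if_pos hS']
    simp [LL, hX, hY, hS]
  · -- ¬hX, ¬hY, hS : empty site, S = 1
    rw [if_neg hX] at hAx
    rw [if_neg hY] at hAy
    have hS' : Ac y ((i : ℕ) + 1) = Ac x ((i : ℕ) + 1) + 1 := by omega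
    rw [hcfgx, hcfgy, hcast, hsucc, if_neg hX, if_neg hY, if_pos hS, if_pos hS']
    simp [LL, hX, hY, hS]
  · -- ¬hX, ¬hY, ¬hS : empty site, S = 0
    rw [if_neg hX] at hAx
    rw [if_neg hY] at hAy
    have hS' : ¬(Ac y ((i : ℕ) + 1) = Ac x ((i : ℕ) + 1) + 1) := by omega
    rw [hcfgx, hcfgy, hcast, hsucc, if_neg hX, if_neg hY, if_neg hS, if_neg hS']
    simp [LL, hX, hY, hS]


lemma split_card (B X : Fin M → Prop) [DecidablePred B] [DecidablePred X] :
    (univ.filter fun i => X i ∧ B i).card + (univ.filter fun i => ¬ X i ∧ B i).card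
      = (univ.filter B).card := by
  rw [← Finset.card_filter_add_card_filter_not (s := univ.filter B) (p := X)]
  congr 1 <;>
    · rw [Finset.filter_filter]
      apply congrArg
      apply filter_congr
      intro i _
      tauto

lemma notmem_US {i : Fin M} (hXi : ∃ ℓ, x ℓ = i) : i ∉ US x y := by
  simp only [US, mem_filter, mem_univ, true_and, not_and, not_not]
  intro _
  exact hXi

lemma notmem_DS {i : Fin M} (hYi : ∃ m, y m = i) : i ∉ DS x y := by
  simp only [DS, mem_filter, mem_univ, true_and, not_and, not_not]
  intro _
  exact hYi

lemma notmem_US' {i : Fin M} (hYi : ¬ ∃ m, y m = i) : i ∉ US x y := by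
  simp only [US, mem_filter, mem_univ, true_and, not_and, not_not]
  intro h
  exact absurd h hYi

lemma notmem_DS' {i : Fin M} (hXi : ¬ ∃ ℓ, x ℓ = i) : i ∉ DS x y := by
  simp only [DS, mem_filter, mem_univ, true_and, not_and, not_not]
  intro h
  exact absurd h hXi

lemma T3_card (hx : StrictMono x) (hy : StrictMono y) (hI : interlace y x)
    (hU : (US x y).card = (Pset y x).card) (hD : (DS x y).card = (Qset y x).card) :
    (univ.filter fun i : Fin M =>
        (∃ ℓ, x ℓ = i) ∧ (∃ m, y m = i) ∧ Ac y (i : ℕ) = Ac x (i : ℕ) + 1).card =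
      ∑ l : Fin (Pset y x).card, cnt x (pseq y x l) (qseq y x ((l : ℕ) + 1)) := by
  have hset : (univ.filter fun i : Fin M =>
      (∃ ℓ, x ℓ = i) ∧ (∃ m, y m = i) ∧ Ac y (i : ℕ) = Ac x (i : ℕ) + 1) =
      univ.biUnion (fun l : Fin (Pset y x).card => univ.filter fun i : Fin M =>
        (∃ ℓ, x ℓ = i) ∧ pseq y x l < (i : ℕ) + 1 ∧ (i : ℕ) + 1 < qseq y x ((l : ℕ) + 1)) := by
    ext i
    simp only [mem_filter, mem_univ, true_and, mem_biUnion]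
    constructor
    · rintro ⟨hXi, hYi, hSi⟩
      obtain ⟨l, hl1, hl2, _⟩ := cover1 hx hy hI hU hD i hSi (notmem_US hXi) (notmem_DS hYi)
      exact ⟨l, hXi, hl1, hl2⟩
    · rintro ⟨l, hXi, h1, h2⟩
      obtain ⟨_, _, hSi, hiU, hiD⟩ := between1 hx hy hI hU hD l i h1 h2
      refine ⟨hXi, ?_, hSi⟩
      by_contra hYi
      exact hiD (by simp only [DS, mem_filter, mem_univ, true_and]; exact ⟨hXi, hYi⟩)
  rw [hset, Finset.card_biUnion]
  · apply Finset.sum_congr rfl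
    intro l _
    exact (cnt_site hx _ _).symm
  · intro l _ l' _ hne
    rw [Function.onFun, Finset.disjoint_left]
    intro i hi hi'
    simp only [mem_filter, mem_univ, true_and] at hi hi'
    have b1 := between1 hx hy hI hU hD l i hi.2.1 hi.2.2
    have b2 := between1 hx hy hI hU hD l' i hi'.2.1 hi'.2.2
    exact hne (Fin.ext (by omega))

lemma T4_card (hx : StrictMono x) (hy : StrictMono y) (hI : interlace y x)
    (hU : (US x y).card = (Pset y x).card) (hD : (DS x y).card = (Qset y x).card) :
    (univ.filter fun i : Fin M =>
        ¬(∃ ℓ, x ℓ = i) ∧ ¬(∃ m, y m = i) ∧ Ac y (i : ℕ) = Ac x (i : ℕ) + 1).card =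
      ∑ l : Fin (Pset y x).card, (qseq y x ((l : ℕ) + 1) - pseq y x l - 1 -
        cnt x (pseq y x l) (qseq y x ((l : ℕ) + 1))) := by
  have hset : (univ.filter fun i : Fin M =>
      ¬(∃ ℓ, x ℓ = i) ∧ ¬(∃ m, y m = i) ∧ Ac y (i : ℕ) = Ac x (i : ℕ) + 1) =
      univ.biUnion (fun l : Fin (Pset y x).card => univ.filter fun i : Fin M =>
        ¬(∃ ℓ, x ℓ = i) ∧ pseq y x l < (i : ℕ) + 1 ∧ (i : ℕ) + 1 < qseq y x ((l : ℕ) + 1)) := by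
    ext i
    simp only [mem_filter, mem_univ, true_and, mem_biUnion]
    constructor
    · rintro ⟨hXi, hYi, hSi⟩
      obtain ⟨l, hl1, hl2, _⟩ := cover1 hx hy hI hU hD i hSi (notmem_US' hYi) (notmem_DS' hXi)
      exact ⟨l, hXi, hl1, hl2⟩
    · rintro ⟨l, hXi, h1, h2⟩
      obtain ⟨_, _, hSi, hiU, hiD⟩ := between1 hx hy hI hU hD l i h1 h2
      refine ⟨hXi, ?_, hSi⟩
      by_contra hYi
      exact hiU (by simp only [US, mem_filter, mem_univ, true_and]; exact ⟨hYi, hXi⟩)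
  rw [hset, Finset.card_biUnion]
  · apply Finset.sum_congr rfl
    intro l _
    have htot := card_between (M := M) (pseq y x l) (qseq y x ((l : ℕ) + 1))
      (qseq_le_M1 _)
    have hsplit := split_card (M := M)
      (fun i => pseq y x l < (i : ℕ) + 1 ∧ (i : ℕ) + 1 < qseq y x ((l : ℕ) + 1))
      (fun i => ∃ ℓ, x ℓ = i)
    have hcnt := cnt_site (M := M) hx (pseq y x l) (qseq y x ((l : ℕ) + 1))
    omega
  · intro l _ l' _ hne
    rw [Function.onFun, Finset.disjoint_left]
    intro i hi hi'
    simp only [mem_filter, mem_univ, true_and] at hi hi'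
    have b1 := between1 hx hy hI hU hD l i hi.2.1 hi.2.2
    have b2 := between1 hx hy hI hU hD l' i hi'.2.1 hi'.2.2
    exact hne (Fin.ext (by omega))

lemma T5_card (hx : StrictMono x) (hy : StrictMono y) (hI : interlace y x)
    (hU : (US x y).card = (Pset y x).card) (hD : (DS x y).card = (Qset y x).card) :
    (univ.filter fun i : Fin M =>
        (∃ ℓ, x ℓ = i) ∧ (∃ m, y m = i) ∧ ¬(Ac y (i : ℕ) = Ac x (i : ℕ) + 1)).card =
      ∑ l : Fin (Pset y x).card, cnt x (qseq y x (l : ℕ)) (pseq y x l) := by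
  have hset : (univ.filter fun i : Fin M =>
      (∃ ℓ, x ℓ = i) ∧ (∃ m, y m = i) ∧ ¬(Ac y (i : ℕ) = Ac x (i : ℕ) + 1)) =
      univ.biUnion (fun l : Fin (Pset y x).card => univ.filter fun i : Fin M =>
        (∃ ℓ, x ℓ = i) ∧ qseq y x (l : ℕ) < (i : ℕ) + 1 ∧ (i : ℕ) + 1 < pseq y x l) := by
    ext i
    simp only [mem_filter, mem_univ, true_and, mem_biUnion]
    constructor
    · rintro ⟨hXi, hYi, hSi⟩
      have hbd := bounds_of_interlace x y hx hy hI (i : ℕ)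
      have hSi' : Ac y (i : ℕ) = Ac x (i : ℕ) := by omega
      obtain ⟨l, hl1, hl2, _⟩ := cover0 hx hy hI hU hD i hSi' (notmem_US hXi) (notmem_DS hYi)
      exact ⟨l, hXi, hl1, hl2⟩
    · rintro ⟨l, hXi, h1, h2⟩
      obtain ⟨_, _, hSi, hiU, hiD⟩ := between0 hx hy hI hU hD l i h1 h2
      refine ⟨hXi, ?_, by omega⟩
      by_contra hYi
      exact hiD (by simp only [DS, mem_filter, mem_univ, true_and]; exact ⟨hXi, hYi⟩)
  rw [hset, Finset.card_biUnion]
  · apply Finset.sum_congr rfl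
    intro l _
    exact (cnt_site hx _ _).symm
  · intro l _ l' _ hne
    rw [Function.onFun, Finset.disjoint_left]
    intro i hi hi'
    simp only [mem_filter, mem_univ, true_and] at hi hi'
    have b1 := between0 hx hy hI hU hD l i hi.2.1 hi.2.2
    have b2 := between0 hx hy hI hU hD l' i hi'.2.1 hi'.2.2
    exact hne (Fin.ext (by omega))

lemma T6_card (hx : StrictMono x) (hy : StrictMono y) (hI : interlace y x)
    (hU : (US x y).card = (Pset y x).card) (hD : (DS x y).card = (Qset y x).card) :
    (univ.filter fun i : Fin M =>
        ¬(∃ ℓ, x ℓ = i) ∧ ¬(∃ m, y m = i) ∧ ¬(Ac y (i : ℕ) = Ac x (i : ℕ) + 1)).card =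
      ∑ l : Fin (Pset y x).card, (pseq y x l - qseq y x (l : ℕ) - 1 -
        cnt x (qseq y x (l : ℕ)) (pseq y x l)) := by
  have hset : (univ.filter fun i : Fin M =>
      ¬(∃ ℓ, x ℓ = i) ∧ ¬(∃ m, y m = i) ∧ ¬(Ac y (i : ℕ) = Ac x (i : ℕ) + 1)) =
      univ.biUnion (fun l : Fin (Pset y x).card => univ.filter fun i : Fin M =>
        ¬(∃ ℓ, x ℓ = i) ∧ qseq y x (l : ℕ) < (i : ℕ) + 1 ∧ (i : ℕ) + 1 < pseq y x l) := by
    ext i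
    simp only [mem_filter, mem_univ, true_and, mem_biUnion]
    constructor
    · rintro ⟨hXi, hYi, hSi⟩
      have hbd := bounds_of_interlace x y hx hy hI (i : ℕ)
      have hSi' : Ac y (i : ℕ) = Ac x (i : ℕ) := by omega
      obtain ⟨l, hl1, hl2, _⟩ := cover0 hx hy hI hU hD i hSi' (notmem_US' hYi) (notmem_DS' hXi)
      exact ⟨l, hXi, hl1, hl2⟩
    · rintro ⟨l, hXi, h1, h2⟩
      obtain ⟨_, _, hSi, hiU, hiD⟩ := between0 hx hy hI hU hD l i h1 h2
      refine ⟨hXi, ?_, by omega⟩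
      by_contra hYi
      exact hiU (by simp only [US, mem_filter, mem_univ, true_and]; exact ⟨hYi, hXi⟩)
  rw [hset, Finset.card_biUnion]
  · apply Finset.sum_congr rfl
    intro l _
    have htot := card_between (M := M) (qseq y x (l : ℕ)) (pseq y x l)
      (le_trans (pseq_le_M l) (by omega))
    have hsplit := split_card (M := M)
      (fun i => qseq y x (l : ℕ) < (i : ℕ) + 1 ∧ (i : ℕ) + 1 < pseq y x l)
      (fun i => ∃ ℓ, x ℓ = i)
    have hcnt := cnt_site (M := M) hx (qseq y x (l : ℕ)) (pseq y x l)
    omega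
  · intro l _ l' _ hne
    rw [Function.onFun, Finset.disjoint_left]
    intro i hi hi'
    simp only [mem_filter, mem_univ, true_and] at hi hi'
    have b1 := between0 hx hy hI hU hD l i hi.2.1 hi.2.2
    have b2 := between0 hx hy hI hU hD l' i hi'.2.1 hi'.2.2
    exact hne (Fin.ext (by omega))

lemma prod_LL (t a b c d e f u : K) (hx : StrictMono x) (hy : StrictMono y)
    (hI : interlace y x) :
    (∏ j : Fin M,
        LL t a b c d e f u (αd x y j.succ) (cfg x j) (αd x y j.castSucc) (cfg y j)) =
      ((1 - t) * d) ^ (Pset y x).card * ((1 - t) * c * u) ^ (Qset y x).card *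
        ∏ j : Fin (Pset y x).card,
          (e * u + t * f) ^ cnt x (pseq y x j) (qseq y x ((j : ℕ) + 1)) *
            (e * u + f) ^ (qseq y x ((j : ℕ) + 1) - pseq y x j - 1 -
              cnt x (pseq y x j) (qseq y x ((j : ℕ) + 1))) *
            (a * t * u + b) ^ cnt x (qseq y x (j : ℕ)) (pseq y x j) *
            (a * u + b) ^ (pseq y x j - qseq y x (j : ℕ) - 1 -
              cnt x (qseq y x (j : ℕ)) (pseq y x j)) := by
  have hU := card_US hx hy hI
  have hD := card_DS hx hy hI
  have hlhs : (∏ j : Fin M,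
      LL t a b c d e f u (αd x y j.succ) (cfg x j) (αd x y j.castSucc) (cfg y j)) =
      ((1 - t) * d) ^ (univ.filter fun i : Fin M =>
          (∃ m, y m = i) ∧ ¬(∃ ℓ, x ℓ = i)).card *
      ((1 - t) * c * u) ^ (univ.filter fun i : Fin M =>
          (∃ ℓ, x ℓ = i) ∧ ¬(∃ m, y m = i)).card *
      (e * u + t * f) ^ (univ.filter fun i : Fin M =>
          (∃ ℓ, x ℓ = i) ∧ (∃ m, y m = i) ∧ Ac y (i : ℕ) = Ac x (i : ℕ) + 1).card *
      (e * u + f) ^ (univ.filter fun i : Fin M =>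
          ¬(∃ ℓ, x ℓ = i) ∧ ¬(∃ m, y m = i) ∧ Ac y (i : ℕ) = Ac x (i : ℕ) + 1).card *
      (a * t * u + b) ^ (univ.filter fun i : Fin M =>
          (∃ ℓ, x ℓ = i) ∧ (∃ m, y m = i) ∧ ¬(Ac y (i : ℕ) = Ac x (i : ℕ) + 1)).card *
      (a * u + b) ^ (univ.filter fun i : Fin M =>
          ¬(∃ ℓ, x ℓ = i) ∧ ¬(∃ m, y m = i) ∧ ¬(Ac y (i : ℕ) = Ac x (i : ℕ) + 1)).card := by
    rw [Finset.prod_congr rfl (fun i _ => LL_site t a b c d e f u hx hy hI i)]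
    rw [Finset.prod_mul_distrib, Finset.prod_mul_distrib, Finset.prod_mul_distrib,
      Finset.prod_mul_distrib, Finset.prod_mul_distrib]
    rw [prod_if_one, prod_if_one, prod_if_one, prod_if_one, prod_if_one, prod_if_one]
  have hrhs : (((1 - t) * d) ^ (Pset y x).card * ((1 - t) * c * u) ^ (Qset y x).card *
      ∏ j : Fin (Pset y x).card,
        (e * u + t * f) ^ cnt x (pseq y x j) (qseq y x ((j : ℕ) + 1)) *
          (e * u + f) ^ (qseq y x ((j : ℕ) + 1) - pseq y x j - 1 -
            cnt x (pseq y x j) (qseq y x ((j : ℕ) + 1))) *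
          (a * t * u + b) ^ cnt x (qseq y x (j : ℕ)) (pseq y x j) *
          (a * u + b) ^ (pseq y x j - qseq y x (j : ℕ) - 1 -
            cnt x (qseq y x (j : ℕ)) (pseq y x j))) =
      ((1 - t) * d) ^ (Pset y x).card * ((1 - t) * c * u) ^ (Qset y x).card *
      (e * u + t * f) ^ (∑ l : Fin (Pset y x).card,
        cnt x (pseq y x l) (qseq y x ((l : ℕ) + 1))) *
      (e * u + f) ^ (∑ l : Fin (Pset y x).card, (qseq y x ((l : ℕ) + 1) - pseq y x l - 1 -
        cnt x (pseq y x l) (qseq y x ((l : ℕ) + 1)))) *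
      (a * t * u + b) ^ (∑ l : Fin (Pset y x).card,
        cnt x (qseq y x (l : ℕ)) (pseq y x l)) *
      (a * u + b) ^ (∑ l : Fin (Pset y x).card, (pseq y x l - qseq y x (l : ℕ) - 1 -
        cnt x (qseq y x (l : ℕ)) (pseq y x l))) := by
    rw [Finset.prod_mul_distrib, Finset.prod_mul_distrib, Finset.prod_mul_distrib]
    rw [Finset.prod_pow_eq_pow_sum, Finset.prod_pow_eq_pow_sum,
      Finset.prod_pow_eq_pow_sum, Finset.prod_pow_eq_pow_sum]
    ring
  rw [hlhs, hrhs]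
  have e1 : (univ.filter fun i : Fin M =>
      (∃ m, y m = i) ∧ ¬(∃ ℓ, x ℓ = i)).card = (Pset y x).card := by
    rw [← hU]; rfl
  have e2 : (univ.filter fun i : Fin M =>
      (∃ ℓ, x ℓ = i) ∧ ¬(∃ m, y m = i)).card = (Qset y x).card := by
    rw [← hD]; rfl
  rw [e1, e2, T3_card hx hy hI hU hD, T4_card hx hy hI hU hD,
    T5_card hx hy hI hU hD, T6_card hx hy hI hU hD]

end Main
end CME



theorem C_matrix_element {M N : ℕ} (t a b c d e f : K)
    (ht : t ≠ 1) (ha : a ≠ 0) (hb : b ≠ 0) (hc : c ≠ 0) (hd : d ≠ 0)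
    (he : e ≠ 0) (hf : f ≠ 0)
    (hcon1 : c * d + a * f = 0) (hcon2 : t * (c * d) + b * e = 0)
    (u : K)
    (x : Fin N → Fin M) (hx : StrictMono x)
    (y : Fin (N + 1) → Fin M) (hy : StrictMono y) :
    Cop M t a b c d e f u (cfg x) (cfg y) = Gbarskew t a b c d e f u y x := by
  rw [CME.Cop_apply t a b c d e f u hx hy]
  unfold Gbarskew
  split_ifs with hI
  · exact CME.prod_LL t a b c d e f u hx hy hI
  · rfl
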